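/- arXiv:2508.12547 — 2 statements merged into one kernel-verified Lean document; each statement's English description precedes it below -/
import Mathlib

section
/- Let n ≥ 1, C > 0, and Φ : ℝ → ℝ differentiable with (Φ'(u) − Φ'(v))(u − v) ≥ −C|u−v|² and |Φ'(u)| ≤ C(1+|u|ⁿ) for all u,v ∈ ℝ. Then there exists C' > 0 such that for all u,v ∈ ℝ and all probability measures μ, ν on ℝ with finite second moments: (−Φ'(u)Var[μ] + Φ'(v)Var[ν])·(u−v) ≤ C'(∫x²dμ + ∫x²dν)|u−v|² + C'(1+|u|^{2n})·W₂(μ,ν)². -/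
open MeasureTheory

/-- The mean of a measure on ℝ. -/
noncomputable def meanM (μ : Measure ℝ) : ℝ := ∫ x, x ∂μ

/-- The variance of a measure on ℝ. -/
noncomputable def varM (μ : Measure ℝ) : ℝ := ∫ x, (x - meanM μ) ^ 2 ∂μ

/-- The L²-Wasserstein distance between two probability measures on ℝ. -/
noncomputable def W2 (μ ν : Measure ℝ) : ℝ :=
  sInf {r : ℝ | ∃ π : Measure (ℝ × ℝ), IsProbabilityMeasure π ∧
    π.map Prod.fst = μ ∧ π.map Prod.snd = ν ∧
    r = Real.sqrt (∫ p, (p.1 - p.2) ^ 2 ∂π)}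

section Helpers

variable {α : Type*} [MeasurableSpace α] {μ : Measure α} {f g : α → ℝ}

lemma memLp_mul_int (hf : MemLp f 2 μ) (hg : MemLp g 2 μ) :
    Integrable (fun x => f x * g x) μ := by
  refine Integrable.mono' (hf.integrable_sq.add hg.integrable_sq) (hf.1.mul hg.1)
    (Filter.Eventually.of_forall fun x => ?_)
  rw [Real.norm_eq_abs, abs_mul]
  simp only [Pi.add_apply]
  nlinarith [sq_nonneg (|f x| - |g x|), sq_abs (f x), sq_abs (g x)]

lemma integral_mul_le_sqrt (hf : MemLp f 2 μ) (hg : MemLp g 2 μ) :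
    ∫ x, f x * g x ∂μ ≤ Real.sqrt (∫ x, f x ^ 2 ∂μ) * Real.sqrt (∫ x, g x ^ 2 ∂μ) := by
  have h22 : (2 : ℝ).HolderConjugate 2 := Real.HolderConjugate.two_two
  have hf2 : MemLp f (ENNReal.ofReal 2) μ := by rwa [ENNReal.ofReal_ofNat]
  have hg2 : MemLp g (ENNReal.ofReal 2) μ := by rwa [ENNReal.ofReal_ofNat]
  have key := integral_mul_norm_le_Lp_mul_Lq h22 hf2 hg2
  have ef : ∫ a, ‖f a‖ ^ (2 : ℝ) ∂μ = ∫ a, f a ^ 2 ∂μ := by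
    refine integral_congr_ae (Filter.Eventually.of_forall fun a => ?_)
    show ‖f a‖ ^ (2 : ℝ) = f a ^ 2
    rw [Real.rpow_two, Real.norm_eq_abs, sq_abs]
  have eg : ∫ a, ‖g a‖ ^ (2 : ℝ) ∂μ = ∫ a, g a ^ 2 ∂μ := by
    refine integral_congr_ae (Filter.Eventually.of_forall fun a => ?_)
    show ‖g a‖ ^ (2 : ℝ) = g a ^ 2
    rw [Real.rpow_two, Real.norm_eq_abs, sq_abs]
  rw [ef, eg] at key
  have hF : (0 : ℝ) ≤ ∫ x, f x ^ 2 ∂μ := integral_nonneg fun x => sq_nonneg _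
  have hG : (0 : ℝ) ≤ ∫ x, g x ^ 2 ∂μ := integral_nonneg fun x => sq_nonneg _
  rw [← Real.sqrt_eq_rpow, ← Real.sqrt_eq_rpow] at key
  refine le_trans ?_ key
  refine integral_mono (memLp_mul_int hf hg) (memLp_mul_int hf.norm hg.norm) fun a => ?_
  calc f a * g a ≤ |f a * g a| := le_abs_self _
    _ = ‖f a‖ * ‖g a‖ := by rw [abs_mul, Real.norm_eq_abs, Real.norm_eq_abs]

lemma sqrt_integral_add_sq_le (hf : MemLp f 2 μ) (hg : MemLp g 2 μ) :
    Real.sqrt (∫ x, (f x + g x) ^ 2 ∂μ) ≤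
      Real.sqrt (∫ x, f x ^ 2 ∂μ) + Real.sqrt (∫ x, g x ^ 2 ∂μ) := by
  set F := ∫ x, f x ^ 2 ∂μ with hFdef
  set G := ∫ x, g x ^ 2 ∂μ with hGdef
  have hF : (0 : ℝ) ≤ F := integral_nonneg fun x => sq_nonneg _
  have hG : (0 : ℝ) ≤ G := integral_nonneg fun x => sq_nonneg _
  have hfg := memLp_mul_int hf hg
  have expand : ∫ x, (f x + g x) ^ 2 ∂μ = F + 2 * (∫ x, f x * g x ∂μ) + G := by
    calc ∫ x, (f x + g x) ^ 2 ∂μ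
        = ∫ x, (f x ^ 2 + 2 * (f x * g x) + g x ^ 2) ∂μ :=
          integral_congr_ae (Filter.Eventually.of_forall fun x => by ring)
      _ = (∫ x, (f x ^ 2 + 2 * (f x * g x)) ∂μ) + G :=
          integral_add (hf.integrable_sq.add (hfg.const_mul 2)) hg.integrable_sq
      _ = ((∫ x, f x ^ 2 ∂μ) + ∫ x, 2 * (f x * g x) ∂μ) + G :=
          congrArg (· + G) (integral_add hf.integrable_sq (hfg.const_mul 2))
      _ = F + 2 * (∫ x, f x * g x ∂μ) + G := by rw [integral_const_mul]
  have CS := integral_mul_le_sqrt hf hg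
  have bound : ∫ x, (f x + g x) ^ 2 ∂μ ≤ (Real.sqrt F + Real.sqrt G) ^ 2 := by
    rw [expand]
    nlinarith [Real.sq_sqrt hF, Real.sq_sqrt hG, CS, Real.sqrt_nonneg F, Real.sqrt_nonneg G]
  calc Real.sqrt (∫ x, (f x + g x) ^ 2 ∂μ) ≤ Real.sqrt ((Real.sqrt F + Real.sqrt G) ^ 2) :=
        Real.sqrt_le_sqrt bound
    _ = Real.sqrt F + Real.sqrt G :=
        Real.sqrt_sq (add_nonneg (Real.sqrt_nonneg _) (Real.sqrt_nonneg _))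

end Helpers

section VarLemmas

variable {μ : Measure ℝ} [IsProbabilityMeasure μ]

lemma integrable_id_of_sq (hμ2 : Integrable (fun x => x ^ 2) μ) :
    Integrable (fun x : ℝ => x) μ := by
  refine Integrable.mono' ((integrable_const (1 : ℝ)).add hμ2)
    measurable_id.aestronglyMeasurable (Filter.Eventually.of_forall fun x => ?_)
  simp only [Real.norm_eq_abs, Pi.add_apply]
  nlinarith [sq_nonneg (|x| - 1), sq_abs x, abs_nonneg x]

lemma integral_sub_const_sq (hμ2 : Integrable (fun x => x ^ 2) μ) (c : ℝ) :
    ∫ x, (x - c) ^ 2 ∂μ = (∫ x, x ^ 2 ∂μ) - 2 * c * meanM μ + c ^ 2 := by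
  have hμ1 := integrable_id_of_sq hμ2
  calc ∫ x, (x - c) ^ 2 ∂μ
      = ∫ x, (x ^ 2 - (2 * c) * x + c ^ 2) ∂μ :=
        integral_congr_ae (Filter.Eventually.of_forall fun x => by ring)
    _ = (∫ x, (x ^ 2 - (2 * c) * x) ∂μ) + ∫ _x, c ^ 2 ∂μ :=
        integral_add (hμ2.sub (hμ1.const_mul _)) (integrable_const _)
    _ = ((∫ x, x ^ 2 ∂μ) - ∫ x, (2 * c) * x ∂μ) + ∫ _x, c ^ 2 ∂μ :=
        congrArg (· + _) (integral_sub hμ2 (hμ1.const_mul _))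
    _ = (∫ x, x ^ 2 ∂μ) - 2 * c * meanM μ + c ^ 2 := by
        rw [integral_const_mul]
        simp [meanM, measure_univ]

lemma varM_nonneg (μ : Measure ℝ) : 0 ≤ varM μ := integral_nonneg fun x => sq_nonneg _

lemma varM_le_shift (hμ2 : Integrable (fun x => x ^ 2) μ) (c : ℝ) :
    varM μ ≤ ∫ x, (x - c) ^ 2 ∂μ := by
  rw [varM, integral_sub_const_sq hμ2, integral_sub_const_sq hμ2]
  nlinarith [sq_nonneg (meanM μ - c)]

lemma varM_le_sq_integral (hμ2 : Integrable (fun x => x ^ 2) μ) :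
    varM μ ≤ ∫ x, x ^ 2 ∂μ := by
  rw [varM, integral_sub_const_sq hμ2]
  nlinarith [sq_nonneg (meanM μ)]

end VarLemmas

lemma sqrt_varM_coupling (μ ν : Measure ℝ) [IsProbabilityMeasure μ] [IsProbabilityMeasure ν]
    (hμ2 : Integrable (fun x => x ^ 2) μ) (hν2 : Integrable (fun x => x ^ 2) ν)
    (π : Measure (ℝ × ℝ)) [IsProbabilityMeasure π]
    (h1 : π.map Prod.fst = μ) (h2 : π.map Prod.snd = ν) :
    Real.sqrt (varM μ) ≤ Real.sqrt (varM ν) + Real.sqrt (∫ p, (p.1 - p.2) ^ 2 ∂π) := by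
  set m := meanM ν with hm
  have hπ1 : Integrable (fun p : ℝ × ℝ => p.1 ^ 2) π := by
    have h := hμ2
    rw [← h1] at h
    simpa [Function.comp_def] using
      (integrable_map_measure (measurable_id.pow_const 2).aestronglyMeasurable
        measurable_fst.aemeasurable).mp h
  have hπ2 : Integrable (fun p : ℝ × ℝ => p.2 ^ 2) π := by
    have h := hν2
    rw [← h2] at h
    simpa [Function.comp_def] using
      (integrable_map_measure (measurable_id.pow_const 2).aestronglyMeasurable
        measurable_snd.aemeasurable).mp h
  have hmf : MemLp (fun p : ℝ × ℝ => p.1 - p.2) 2 π := by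
    refine (memLp_two_iff_integrable_sq
      ((measurable_fst.sub measurable_snd).aestronglyMeasurable)).mpr ?_
    refine Integrable.mono' ((hπ1.const_mul 2).add (hπ2.const_mul 2))
      (((measurable_fst.sub measurable_snd).pow_const 2).aestronglyMeasurable)
      (Filter.Eventually.of_forall fun p => ?_)
    rw [Real.norm_eq_abs, abs_of_nonneg (sq_nonneg _)]
    simp only [Pi.add_apply, Pi.sub_apply]
    nlinarith [sq_nonneg (p.1 + p.2)]
  have hmg : MemLp (fun p : ℝ × ℝ => p.2 - m) 2 π := by
    refine (memLp_two_iff_integrable_sq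
      ((measurable_snd.sub_const m).aestronglyMeasurable)).mpr ?_
    refine Integrable.mono' ((hπ2.const_mul 2).add (integrable_const (2 * m ^ 2)))
      (((measurable_snd.sub_const m).pow_const 2).aestronglyMeasurable)
      (Filter.Eventually.of_forall fun p => ?_)
    rw [Real.norm_eq_abs, abs_of_nonneg (sq_nonneg _)]
    simp only [Pi.add_apply]
    nlinarith [sq_nonneg (p.2 + m)]
  have mink := sqrt_integral_add_sq_le hmf hmg
  have heq : ∫ p : ℝ × ℝ, (p.1 - p.2 + (p.2 - m)) ^ 2 ∂π = ∫ p : ℝ × ℝ, (p.1 - m) ^ 2 ∂π :=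
    integral_congr_ae (Filter.Eventually.of_forall fun p => by ring)
  rw [heq] at mink
  have e1 : ∫ x, (x - m) ^ 2 ∂μ = ∫ p : ℝ × ℝ, (p.1 - m) ^ 2 ∂π := by
    rw [← h1, integral_map (f := fun x : ℝ => (x - m) ^ 2) measurable_fst.aemeasurable
      ((measurable_id.sub_const m).pow_const 2).aestronglyMeasurable]
  have e2 : ∫ p : ℝ × ℝ, (p.2 - m) ^ 2 ∂π = varM ν := by
    rw [varM, ← hm, ← h2, integral_map (f := fun x : ℝ => (x - m) ^ 2)
      measurable_snd.aemeasurable ((measurable_id.sub_const m).pow_const 2).aestronglyMeasurable]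
  rw [e2] at mink
  have step1 : varM μ ≤ ∫ p : ℝ × ℝ, (p.1 - m) ^ 2 ∂π := by
    rw [← e1]; exact varM_le_shift hμ2 m
  calc Real.sqrt (varM μ) ≤ Real.sqrt (∫ p : ℝ × ℝ, (p.1 - m) ^ 2 ∂π) :=
        Real.sqrt_le_sqrt step1
    _ ≤ Real.sqrt (∫ p, (p.1 - p.2) ^ 2 ∂π) + Real.sqrt (varM ν) := mink
    _ = Real.sqrt (varM ν) + Real.sqrt (∫ p, (p.1 - p.2) ^ 2 ∂π) := by ring

lemma abs_sqrt_varM_sub_le_W2 (μ ν : Measure ℝ) [IsProbabilityMeasure μ] [IsProbabilityMeasure ν]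
    (hμ2 : Integrable (fun x => x ^ 2) μ) (hν2 : Integrable (fun x => x ^ 2) ν) :
    |Real.sqrt (varM μ) - Real.sqrt (varM ν)| ≤ W2 μ ν := by
  have hne : {r : ℝ | ∃ π : Measure (ℝ × ℝ), IsProbabilityMeasure π ∧
      π.map Prod.fst = μ ∧ π.map Prod.snd = ν ∧
      r = Real.sqrt (∫ p, (p.1 - p.2) ^ 2 ∂π)}.Nonempty := by
    refine ⟨Real.sqrt (∫ p, (p.1 - p.2) ^ 2 ∂(μ.prod ν)), μ.prod ν, inferInstance, ?_, ?_, rfl⟩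
    · simp [Measure.map_fst_prod, measure_univ]
    · simp [Measure.map_snd_prod, measure_univ]
  refine le_csInf hne ?_
  rintro r ⟨π, hπ, h1, h2, rfl⟩
  rw [abs_sub_le_iff]
  constructor
  · linarith [sqrt_varM_coupling μ ν hμ2 hν2 π h1 h2]
  · have h2' : (π.map (fun p : ℝ × ℝ => (p.2, p.1))).map Prod.fst = ν := by
      rw [Measure.map_map measurable_fst (measurable_snd.prodMk measurable_fst)]
      exact h2
    have h1' : (π.map (fun p : ℝ × ℝ => (p.2, p.1))).map Prod.snd = μ := by
      rw [Measure.map_map measurable_snd (measurable_snd.prodMk measurable_fst)]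
      exact h1
    have : IsProbabilityMeasure (π.map (fun p : ℝ × ℝ => (p.2, p.1))) :=
      Measure.isProbabilityMeasure_map (measurable_snd.prodMk measurable_fst).aemeasurable
    have key := sqrt_varM_coupling ν μ hν2 hμ2 (π.map (fun p : ℝ × ℝ => (p.2, p.1))) h2' h1'
    have e : ∫ p, (p.1 - p.2) ^ 2 ∂(π.map (fun p : ℝ × ℝ => (p.2, p.1))) =
        ∫ p, (p.1 - p.2) ^ 2 ∂π := by
      rw [integral_map (f := fun p : ℝ × ℝ => (p.1 - p.2) ^ 2) (measurable_snd.prodMk measurable_fst).aemeasurable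
        ((measurable_fst.sub measurable_snd).pow_const 2).aestronglyMeasurable]
      exact integral_congr_ae (Filter.Eventually.of_forall fun p => by ring)
    rw [e] at key
    linarith

lemma W2_nonneg (μ ν : Measure ℝ) [IsProbabilityMeasure μ] [IsProbabilityMeasure ν] :
    0 ≤ W2 μ ν := by
  have hne : {r : ℝ | ∃ π : Measure (ℝ × ℝ), IsProbabilityMeasure π ∧
      π.map Prod.fst = μ ∧ π.map Prod.snd = ν ∧
      r = Real.sqrt (∫ p, (p.1 - p.2) ^ 2 ∂π)}.Nonempty := by
    refine ⟨Real.sqrt (∫ p, (p.1 - p.2) ^ 2 ∂(μ.prod ν)), μ.prod ν, inferInstance, ?_, ?_, rfl⟩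
    · simp [Measure.map_fst_prod, measure_univ]
    · simp [Measure.map_snd_prod, measure_univ]
  refine le_csInf hne ?_
  rintro r ⟨π, hπ, h1, h2, rfl⟩
  exact Real.sqrt_nonneg _

set_option maxHeartbeats 1000000 in
theorem stmt6 (n : ℕ) (hn : 1 ≤ n) (C : ℝ) (hC : 0 < C) (Φ : ℝ → ℝ)
    (hΦ : Differentiable ℝ Φ)
    (hmono : ∀ u v : ℝ, (deriv Φ u - deriv Φ v) * (u - v) ≥ -C * |u - v| ^ 2)
    (hgrowth : ∀ u : ℝ, |deriv Φ u| ≤ C * (1 + |u| ^ n)) :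
    ∃ C' > 0, ∀ (u v : ℝ) (μ ν : Measure ℝ),
      IsProbabilityMeasure μ → IsProbabilityMeasure ν →
      Integrable (fun x => x ^ 2) μ → Integrable (fun x => x ^ 2) ν →
      (-(deriv Φ u) * varM μ + deriv Φ v * varM ν) * (u - v) ≤
        C' * ((∫ x, x ^ 2 ∂μ) + ∫ x, x ^ 2 ∂ν) * |u - v| ^ 2 +
          C' * (1 + |u| ^ (2 * n)) * W2 μ ν ^ 2 := by
  refine ⟨(C + 1) ^ 2, by positivity, ?_⟩
  intro u v μ ν hμp hνp hμ2 hν2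
  set a := deriv Φ u with ha
  set b := deriv Φ v with hb
  set A := ∫ x, x ^ 2 ∂μ with hA
  set B := ∫ x, x ^ 2 ∂ν with hB
  set Vμ := varM μ with hVμ
  set Vν := varM ν with hVν
  set sμ := Real.sqrt Vμ with hsμ
  set sν := Real.sqrt Vν with hsν
  set W := W2 μ ν with hW
  set D := |u - v| with hD
  set P := |u| ^ n with hP
  have hVμ0 : 0 ≤ Vμ := varM_nonneg μ
  have hVν0 : 0 ≤ Vν := varM_nonneg ν
  have hVμA : Vμ ≤ A := varM_le_sq_integral hμ2
  have hVνB : Vν ≤ B := varM_le_sq_integral hν2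
  have hA0 : 0 ≤ A := integral_nonneg fun x => sq_nonneg _
  have hB0 : 0 ≤ B := integral_nonneg fun x => sq_nonneg _
  have hW0 : 0 ≤ W := W2_nonneg μ ν
  have hD0 : 0 ≤ D := abs_nonneg _
  have hP0 : 0 ≤ P := pow_nonneg (abs_nonneg _) n
  have hsμ0 : 0 ≤ sμ := Real.sqrt_nonneg _
  have hsν0 : 0 ≤ sν := Real.sqrt_nonneg _
  have hsqμ : sμ ^ 2 = Vμ := Real.sq_sqrt hVμ0
  have hsqν : sν ^ 2 = Vν := Real.sq_sqrt hVν0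
  have hsW : |sμ - sν| ≤ W := abs_sqrt_varM_sub_le_W2 μ ν hμ2 hν2
  have hQ : |u| ^ (2 * n) = P ^ 2 := by rw [hP, ← pow_mul, mul_comm]
  -- bound on |Vν - Vμ|
  have h4 : |Vν - Vμ| ≤ (sμ + sν) * W := by
    have hd : Vν - Vμ = (sν - sμ) * (sν + sμ) := by rw [← hsqμ, ← hsqν]; ring
    rw [hd, abs_mul, abs_of_nonneg (add_nonneg hsν0 hsμ0)]
    calc |sν - sμ| * (sν + sμ) ≤ W * (sν + sμ) := by
          refine mul_le_mul_of_nonneg_right ?_ (add_nonneg hsν0 hsμ0)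
          rwa [abs_sub_comm]
      _ = (sμ + sν) * W := by ring
  -- first term bound
  have h3 : a * (Vν - Vμ) * (u - v) ≤ |a| * |Vν - Vμ| * D := by
    calc a * (Vν - Vμ) * (u - v) ≤ |a * (Vν - Vμ) * (u - v)| := le_abs_self _
      _ = |a| * |Vν - Vμ| * D := by rw [abs_mul, abs_mul]
  have h5 : |a| * |Vν - Vμ| * D ≤ (C * (1 + P)) * ((sμ + sν) * W) * D := by
    refine mul_le_mul_of_nonneg_right ?_ hD0
    exact mul_le_mul (hgrowth u) h4 (abs_nonneg _) ((abs_nonneg a).trans (hgrowth u))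
  -- second term bound (monotonicity)
  have h2 : -((a - b) * (u - v)) ≤ C * D ^ 2 := by
    have := hmono u v
    rw [← ha, ← hb, ← hD] at this
    linarith only [this]
  have h2' : (-((a - b) * (u - v))) * Vν ≤ (C * D ^ 2) * Vν :=
    mul_le_mul_of_nonneg_right h2 hVν0
  -- AM-GM pieces
  have k1 : (C * (1 + P)) * ((sμ + sν) * W) * D ≤
      (1 / 2) * ((sμ + sν) * D) ^ 2 + (1 / 2) * (C * (1 + P) * W) ^ 2 := by
    linarith only [sq_nonneg ((sμ + sν) * D - C * (1 + P) * W)]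
  have hb1 : (sμ + sν) ^ 2 ≤ 2 * (A + B) := by
    linarith only [sq_nonneg (sμ - sν), hsqμ, hsqν, hVμA, hVνB]
  have k2 : ((sμ + sν) * D) ^ 2 ≤ 2 * (A + B) * D ^ 2 := by
    calc ((sμ + sν) * D) ^ 2 = (sμ + sν) ^ 2 * D ^ 2 := by ring
      _ ≤ 2 * (A + B) * D ^ 2 := mul_le_mul_of_nonneg_right hb1 (sq_nonneg D)
  have hc1 : (1 + P) ^ 2 ≤ 2 * (1 + P ^ 2) := by linarith only [sq_nonneg (1 - P)]
  have k3 : (C * (1 + P) * W) ^ 2 ≤ 2 * C ^ 2 * (1 + P ^ 2) * W ^ 2 := by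
    calc (C * (1 + P) * W) ^ 2 = (1 + P) ^ 2 * (C ^ 2 * W ^ 2) := by ring
      _ ≤ 2 * (1 + P ^ 2) * (C ^ 2 * W ^ 2) :=
          mul_le_mul_of_nonneg_right hc1 (mul_nonneg (sq_nonneg C) (sq_nonneg W))
      _ = 2 * C ^ 2 * (1 + P ^ 2) * W ^ 2 := by ring
  have k4 : (C * D ^ 2) * Vν ≤ (C * D ^ 2) * B :=
    mul_le_mul_of_nonneg_left hVνB (mul_nonneg hC.le (sq_nonneg D))
  rw [hQ]
  calc (-a * Vμ + b * Vν) * (u - v)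
      = a * (Vν - Vμ) * (u - v) + (-((a - b) * (u - v))) * Vν := by ring
    _ ≤ (C * (1 + P)) * ((sμ + sν) * W) * D + (C * D ^ 2) * Vν :=
        add_le_add (h3.trans h5) h2'
    _ ≤ ((1 / 2) * ((sμ + sν) * D) ^ 2 + (1 / 2) * (C * (1 + P) * W) ^ 2) + (C * D ^ 2) * B :=
        add_le_add k1 k4
    _ ≤ ((1 / 2) * (2 * (A + B) * D ^ 2) + (1 / 2) * (2 * C ^ 2 * (1 + P ^ 2) * W ^ 2)) +
          (C * D ^ 2) * B := by
        refine add_le_add (add_le_add ?_ ?_) le_rfl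
        · linarith only [k2]
        · linarith only [k3]
    _ ≤ (C + 1) ^ 2 * (A + B) * D ^ 2 + (C + 1) ^ 2 * (1 + P ^ 2) * W ^ 2 := by
        have hX : 0 ≤ (A + B) * D ^ 2 := mul_nonneg (add_nonneg hA0 hB0) (sq_nonneg D)
        have hY : 0 ≤ (1 + P ^ 2) * W ^ 2 := by positivity
        have hXB : C * D ^ 2 * B ≤ C * ((A + B) * D ^ 2) := by
          have : B * D ^ 2 ≤ (A + B) * D ^ 2 :=
            mul_le_mul_of_nonneg_right (by linarith only [hA0]) (sq_nonneg D)
          calc C * D ^ 2 * B = C * (B * D ^ 2) := by ring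
            _ ≤ C * ((A + B) * D ^ 2) := mul_le_mul_of_nonneg_left this hC.le
        have e1 : (1 + C) * ((A + B) * D ^ 2) ≤ (C + 1) ^ 2 * ((A + B) * D ^ 2) :=
          mul_le_mul_of_nonneg_right (by nlinarith only [sq_nonneg C, hC.le]) hX
        have e2 : C ^ 2 * ((1 + P ^ 2) * W ^ 2) ≤ (C + 1) ^ 2 * ((1 + P ^ 2) * W ^ 2) :=
          mul_le_mul_of_nonneg_right (by nlinarith only [hC.le]) hY
        linarith only [e1, e2, hXB]
end

section
/- Let k ≥ 1, q ≥ 2 be natural numbers and set A₂(u,μ) := −u^{2k−1}∫y^{2q−2}dμ(y). There exists C > 0 such that for all u, v ∈ ℝ and all probability measures μ, ν on ℝ with finite (4q−6)-th moments: (A₂(u,μ) − A₂(v,ν))·(u−v) ≤ C(∫|y|^{4q−6}dμ + ∫|y|^{4q−6}dν)·|u−v|² + C|v|^{4k−2}·W₂(μ,ν)². -/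
open MeasureTheory

lemma aux_abs_pow_le_one_add (x : ℝ) {i j : ℕ} (h : i ≤ j) : |x| ^ i ≤ 1 + |x| ^ j := by
  rcases le_total |x| 1 with hx | hx
  · have : |x| ^ i ≤ 1 := pow_le_one₀ (abs_nonneg x) hx
    have : (0:ℝ) ≤ |x| ^ j := pow_nonneg (abs_nonneg x) _
    linarith [pow_le_one₀ (abs_nonneg x) hx (n := i)]
  · have : |x| ^ i ≤ |x| ^ j := pow_le_pow_right₀ hx h
    linarith

lemma aux_pow_sub_pow (m : ℕ) (a b : ℝ) :
    |b ^ m - a ^ m| ≤ (m : ℝ) * ((|a| ^ (m - 1) + |b| ^ (m - 1)) * |a - b|) := by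
  have key := geom_sum₂_mul b a m
  have habs : |b ^ m - a ^ m|
      = |∑ i ∈ Finset.range m, b ^ i * a ^ (m - 1 - i)| * |b - a| := by
    rw [← key, abs_mul]
  rw [habs, abs_sub_comm b a]
  have hsum : |∑ i ∈ Finset.range m, b ^ i * a ^ (m - 1 - i)|
      ≤ (m : ℝ) * (|a| ^ (m - 1) + |b| ^ (m - 1)) := by
    calc |∑ i ∈ Finset.range m, b ^ i * a ^ (m - 1 - i)|
        ≤ ∑ i ∈ Finset.range m, |b ^ i * a ^ (m - 1 - i)| :=
          Finset.abs_sum_le_sum_abs _ _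
      _ ≤ ∑ _i ∈ Finset.range m, (|a| ^ (m - 1) + |b| ^ (m - 1)) := by
          apply Finset.sum_le_sum
          intro i hi
          have hi' : i ≤ m - 1 := by
            have := Finset.mem_range.mp hi; omega
          rw [abs_mul, abs_pow, abs_pow]
          rcases le_total |b| |a| with hab | hab
          · have h1 : |b| ^ i * |a| ^ (m - 1 - i) ≤ |a| ^ i * |a| ^ (m - 1 - i) :=
              mul_le_mul_of_nonneg_right (pow_le_pow_left₀ (abs_nonneg b) hab i)
                (pow_nonneg (abs_nonneg a) _)
            have h2 : |a| ^ i * |a| ^ (m - 1 - i) = |a| ^ (m - 1) := by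
              rw [← pow_add]; congr 1; omega
            have h3 : (0:ℝ) ≤ |b| ^ (m - 1) := pow_nonneg (abs_nonneg b) _
            linarith
          · have h1 : |b| ^ i * |a| ^ (m - 1 - i) ≤ |b| ^ i * |b| ^ (m - 1 - i) :=
              mul_le_mul_of_nonneg_left (pow_le_pow_left₀ (abs_nonneg a) hab _)
                (pow_nonneg (abs_nonneg b) _)
            have h2 : |b| ^ i * |b| ^ (m - 1 - i) = |b| ^ (m - 1) := by
              rw [← pow_add]; congr 1; omega
            have h3 : (0:ℝ) ≤ |a| ^ (m - 1) := pow_nonneg (abs_nonneg a) _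
            linarith
      _ = (m : ℝ) * (|a| ^ (m - 1) + |b| ^ (m - 1)) := by
          rw [Finset.sum_const, Finset.card_range, nsmul_eq_mul]
  exact mul_le_mul_of_nonneg_right hsum (abs_nonneg _) |>.trans_eq (by ring)

lemma aux_cauchy_schwarz {α : Type*} [MeasurableSpace α] (μ : Measure α) (f g : α → ℝ)
    (hf0 : ∀ x, 0 ≤ f x) (hg0 : ∀ x, 0 ≤ g x)
    (hfm : AEStronglyMeasurable f μ) (hgm : AEStronglyMeasurable g μ)
    (hf2 : Integrable (fun x => f x ^ 2) μ) (hg2 : Integrable (fun x => g x ^ 2) μ) :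
    ∫ x, f x * g x ∂μ ≤ Real.sqrt (∫ x, f x ^ 2 ∂μ) * Real.sqrt (∫ x, g x ^ 2 ∂μ) := by
  have hconj : (2:ℝ).HolderConjugate 2 := by
    constructor <;> norm_num
  have hf : MemLp f (ENNReal.ofReal 2) μ := by
    rw [show ENNReal.ofReal 2 = 2 by norm_num]
    exact (memLp_two_iff_integrable_sq hfm).2 hf2
  have hg : MemLp g (ENNReal.ofReal 2) μ := by
    rw [show ENNReal.ofReal 2 = 2 by norm_num]
    exact (memLp_two_iff_integrable_sq hgm).2 hg2
  have := integral_mul_le_Lp_mul_Lq_of_nonneg hconj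
    (Filter.Eventually.of_forall hf0) (Filter.Eventually.of_forall hg0) hf hg
  have hrw : ∀ h : α → ℝ, (∫ x, h x ^ (2:ℝ) ∂μ) = ∫ x, h x ^ (2:ℕ) ∂μ := by
    intro h
    apply integral_congr_ae
    filter_upwards with x
    rw [show (2:ℝ) = ((2:ℕ):ℝ) by norm_num, Real.rpow_natCast]
  rw [hrw f, hrw g] at this
  refine this.trans ?_
  rw [Real.sqrt_eq_rpow, Real.sqrt_eq_rpow]


lemma aux_coupling_bound (q : ℕ) (hq : 2 ≤ q) (π : Measure (ℝ × ℝ)) [IsProbabilityMeasure π]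
    (hμ : Integrable (fun p : ℝ × ℝ => |p.1| ^ (4 * q - 6)) π)
    (hν : Integrable (fun p : ℝ × ℝ => |p.2| ^ (4 * q - 6)) π) :
    |(∫ p : ℝ × ℝ, p.2 ^ (2 * q - 2) ∂π) - ∫ p : ℝ × ℝ, p.1 ^ (2 * q - 2) ∂π| ≤
      (2 * q : ℝ) * Real.sqrt 2 *
        Real.sqrt ((∫ p : ℝ × ℝ, |p.1| ^ (4 * q - 6) ∂π) + ∫ p : ℝ × ℝ, |p.2| ^ (4 * q - 6) ∂π) *
        Real.sqrt (∫ p : ℝ × ℝ, (p.1 - p.2) ^ 2 ∂π) := by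
  set m := 2 * q - 2 with hm
  set t := 2 * q - 3 with ht
  set s := 4 * q - 6 with hs
  have hts : t * 2 = s := by omega
  have hms : m ≤ s := by omega
  have h2s : 2 ≤ s := by omega
  have hmt : m - 1 = t := by omega
  set F : ℝ × ℝ → ℝ := fun p => |p.1| ^ t + |p.2| ^ t with hF
  set G : ℝ × ℝ → ℝ := fun p => |p.1 - p.2| with hG
  clear_value m t s F G
  have hF0 : ∀ p, 0 ≤ F p := by
    intro p; simp only [hF]; positivity
  have hG0 : ∀ p, 0 ≤ G p := by
    intro p; simp only [hG]; positivity
  have hFm : Measurable F := by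
    rw [hF]; exact (measurable_fst.abs.pow_const t).add (measurable_snd.abs.pow_const t)
  have hGm : Measurable G := by
    rw [hG]; exact (measurable_fst.sub measurable_snd).abs
  -- integrability of F^2
  have hF2 : Integrable (fun p => F p ^ 2) π := by
    refine Integrable.mono' ((hμ.add hν).const_mul 2) (hFm.pow_const 2).aestronglyMeasurable ?_
    filter_upwards with p
    simp only [Pi.add_apply]
    rw [Real.norm_of_nonneg (pow_nonneg (hF0 p) 2)]
    have h1 : (|p.1| ^ t) ^ 2 = |p.1| ^ s := by rw [← pow_mul, hts]
    have h2 : (|p.2| ^ t) ^ 2 = |p.2| ^ s := by rw [← pow_mul, hts]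
    have := sq_nonneg (|p.1| ^ t - |p.2| ^ t)
    simp only [hF]
    nlinarith [sq_nonneg (|p.1| ^ t - |p.2| ^ t)]
  -- integrability of G^2
  have hG2 : Integrable (fun p => G p ^ 2) π := by
    refine Integrable.mono'
      ((((integrable_const (1:ℝ)).add hμ).add ((integrable_const (1:ℝ)).add hν)).const_mul 2)
      (hGm.pow_const 2).aestronglyMeasurable ?_
    filter_upwards with p
    simp only [Pi.add_apply]
    rw [Real.norm_of_nonneg (pow_nonneg (hG0 p) 2)]
    have h1 : p.1 ^ 2 ≤ 1 + |p.1| ^ s := by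
      have := aux_abs_pow_le_one_add p.1 h2s
      rwa [← sq_abs]
    have h2 : p.2 ^ 2 ≤ 1 + |p.2| ^ s := by
      have := aux_abs_pow_le_one_add p.2 h2s
      rwa [← sq_abs]
    have : G p ^ 2 = (p.1 - p.2) ^ 2 := by rw [hG, sq_abs]
    rw [this]
    nlinarith [sq_nonneg (p.1 + p.2)]
  -- integrability of F * G
  have hFG : Integrable (fun p => F p * G p) π := by
    refine Integrable.mono' ((hF2.add hG2).const_mul (1/2))
      (hFm.mul hGm).aestronglyMeasurable ?_
    filter_upwards with p
    simp only [Pi.add_apply]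
    rw [Real.norm_of_nonneg (mul_nonneg (hF0 p) (hG0 p))]
    have h2 := two_mul_le_add_sq (F p) (G p)
    linarith
  -- integrability of the powers
  have hint : ∀ (f : ℝ × ℝ → ℝ), Measurable f →
      Integrable (fun p => |f p| ^ s) π → Integrable (fun p => f p ^ m) π := by
    intro f hf hfi
    refine Integrable.mono' ((integrable_const (1:ℝ)).add hfi)
      (hf.pow_const m).aestronglyMeasurable ?_
    filter_upwards with p
    rw [norm_pow, Real.norm_eq_abs]
    exact aux_abs_pow_le_one_add (f p) hms
  have hint1 : Integrable (fun p : ℝ × ℝ => p.1 ^ m) π := hint _ measurable_fst hμ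
  have hint2 : Integrable (fun p : ℝ × ℝ => p.2 ^ m) π := hint _ measurable_snd hν
  have habs2 : (0:ℝ) ≤ (2 * q : ℝ) := by positivity
  calc |(∫ p : ℝ × ℝ, p.2 ^ m ∂π) - ∫ p : ℝ × ℝ, p.1 ^ m ∂π|
      = |∫ p : ℝ × ℝ, (p.2 ^ m - p.1 ^ m) ∂π| := by rw [integral_sub hint2 hint1]
    _ ≤ ∫ p : ℝ × ℝ, |p.2 ^ m - p.1 ^ m| ∂π := by
        have := norm_integral_le_integral_norm (μ := π) (fun p : ℝ × ℝ => p.2 ^ m - p.1 ^ m)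
        simpa [Real.norm_eq_abs] using this
    _ ≤ ∫ p : ℝ × ℝ, (m : ℝ) * (F p * G p) ∂π := by
        refine integral_mono (hint2.sub hint1).abs (hFG.const_mul _) ?_
        intro p
        have := aux_pow_sub_pow m p.1 p.2
        simp only [hF, hG, hmt] at this ⊢
        exact this
    _ = (m : ℝ) * ∫ p : ℝ × ℝ, F p * G p ∂π := integral_const_mul _ _
    _ ≤ (m : ℝ) * (Real.sqrt (∫ p, F p ^ 2 ∂π) * Real.sqrt (∫ p, G p ^ 2 ∂π)) := by
        refine mul_le_mul_of_nonneg_left ?_ (by positivity)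
        exact aux_cauchy_schwarz π F G hF0 hG0 hFm.aestronglyMeasurable
          hGm.aestronglyMeasurable hF2 hG2
    _ ≤ (2 * q : ℝ) * Real.sqrt 2 *
        Real.sqrt ((∫ p : ℝ × ℝ, |p.1| ^ s ∂π) + ∫ p : ℝ × ℝ, |p.2| ^ s ∂π) *
        Real.sqrt (∫ p : ℝ × ℝ, (p.1 - p.2) ^ 2 ∂π) := by
        have hGeq : (∫ p : ℝ × ℝ, G p ^ 2 ∂π) = ∫ p : ℝ × ℝ, (p.1 - p.2) ^ 2 ∂π := by
          apply integral_congr_ae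
          filter_upwards with p
          rw [hG, sq_abs]
        rw [hGeq]
        have hFle : (∫ p, F p ^ 2 ∂π) ≤
            2 * ((∫ p : ℝ × ℝ, |p.1| ^ s ∂π) + ∫ p : ℝ × ℝ, |p.2| ^ s ∂π) := by
          rw [← integral_add hμ hν, ← integral_const_mul]
          refine integral_mono hF2 ((hμ.add hν).const_mul 2) ?_
          intro p
          have h1 : (|p.1| ^ t) ^ 2 = |p.1| ^ s := by rw [← pow_mul, hts]
          have h2 : (|p.2| ^ t) ^ 2 = |p.2| ^ s := by rw [← pow_mul, hts]
          simp only [hF]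
          nlinarith [sq_nonneg (|p.1| ^ t - |p.2| ^ t)]
        have hsqF : Real.sqrt (∫ p, F p ^ 2 ∂π) ≤
            Real.sqrt 2 * Real.sqrt ((∫ p : ℝ × ℝ, |p.1| ^ s ∂π) + ∫ p : ℝ × ℝ, |p.2| ^ s ∂π) := by
          rw [← Real.sqrt_mul (by norm_num : (0:ℝ) ≤ 2)]
          exact Real.sqrt_le_sqrt hFle
        have hmq : (m : ℝ) ≤ (2 * q : ℝ) := by
          have : m ≤ 2 * q := by omega
          exact_mod_cast this
        calc (m : ℝ) * (Real.sqrt (∫ p, F p ^ 2 ∂π) * Real.sqrt (∫ p : ℝ × ℝ, (p.1 - p.2) ^ 2 ∂π))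
            ≤ (2 * q : ℝ) * ((Real.sqrt 2 *
                Real.sqrt ((∫ p : ℝ × ℝ, |p.1| ^ s ∂π) + ∫ p : ℝ × ℝ, |p.2| ^ s ∂π)) *
                Real.sqrt (∫ p : ℝ × ℝ, (p.1 - p.2) ^ 2 ∂π)) := by
              refine mul_le_mul hmq ?_ (by positivity) habs2
              exact mul_le_mul_of_nonneg_right hsqF (Real.sqrt_nonneg _)
          _ = (2 * q : ℝ) * Real.sqrt 2 *
                Real.sqrt ((∫ p : ℝ × ℝ, |p.1| ^ s ∂π) + ∫ p : ℝ × ℝ, |p.2| ^ s ∂π) *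
                Real.sqrt (∫ p : ℝ × ℝ, (p.1 - p.2) ^ 2 ∂π) := by ring

lemma aux_moment_W2 (q : ℕ) (hq : 2 ≤ q) (μ ν : Measure ℝ)
    [IsProbabilityMeasure μ] [IsProbabilityMeasure ν]
    (hμ : Integrable (fun y => |y| ^ (4 * q - 6)) μ)
    (hν : Integrable (fun y => |y| ^ (4 * q - 6)) ν) :
    |(∫ y, y ^ (2 * q - 2) ∂ν) - ∫ y, y ^ (2 * q - 2) ∂μ| ≤
      (2 * q : ℝ) * Real.sqrt 2 *
        Real.sqrt ((∫ y, |y| ^ (4 * q - 6) ∂μ) + ∫ y, |y| ^ (4 * q - 6) ∂ν) * W2 μ ν := by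
  set T : Set ℝ := {r : ℝ | ∃ π : Measure (ℝ × ℝ), IsProbabilityMeasure π ∧
    π.map Prod.fst = μ ∧ π.map Prod.snd = ν ∧
    r = Real.sqrt (∫ p, (p.1 - p.2) ^ 2 ∂π)} with hT
  have hW2 : W2 μ ν = sInf T := rfl
  set Δ := (∫ y, y ^ (2 * q - 2) ∂ν) - ∫ y, y ^ (2 * q - 2) ∂μ with hΔ
  set S := (∫ y, |y| ^ (4 * q - 6) ∂μ) + ∫ y, |y| ^ (4 * q - 6) ∂ν with hS
  have hS0 : 0 ≤ S :=
    add_nonneg (integral_nonneg fun y => by positivity)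
      (integral_nonneg fun y => by positivity)
  set c : ℝ := (2 * q : ℝ) * Real.sqrt 2 * Real.sqrt S with hc
  have hc0 : 0 ≤ c := by positivity
  -- the key per-coupling bound
  have key : ∀ r ∈ T, |Δ| ≤ c * r := by
    rintro r ⟨π, hπ, hfst, hsnd, rfl⟩
    have hm1 : AEStronglyMeasurable (fun y : ℝ => y ^ (2 * q - 2)) (π.map Prod.fst) :=
      (measurable_id.pow_const _).aestronglyMeasurable
    have hm2 : AEStronglyMeasurable (fun y : ℝ => y ^ (2 * q - 2)) (π.map Prod.snd) :=
      (measurable_id.pow_const _).aestronglyMeasurable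
    have hm3 : AEStronglyMeasurable (fun y : ℝ => |y| ^ (4 * q - 6)) (π.map Prod.fst) :=
      (measurable_id.abs.pow_const _).aestronglyMeasurable
    have hm4 : AEStronglyMeasurable (fun y : ℝ => |y| ^ (4 * q - 6)) (π.map Prod.snd) :=
      (measurable_id.abs.pow_const _).aestronglyMeasurable
    have e1 : (∫ y, y ^ (2 * q - 2) ∂μ) = ∫ p : ℝ × ℝ, p.1 ^ (2 * q - 2) ∂π := by
      rw [← hfst]; exact integral_map measurable_fst.aemeasurable hm1
    have e2 : (∫ y, y ^ (2 * q - 2) ∂ν) = ∫ p : ℝ × ℝ, p.2 ^ (2 * q - 2) ∂π := by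
      rw [← hsnd]; exact integral_map measurable_snd.aemeasurable hm2
    have e3 : (∫ y, |y| ^ (4 * q - 6) ∂μ) = ∫ p : ℝ × ℝ, |p.1| ^ (4 * q - 6) ∂π := by
      rw [← hfst]; exact integral_map measurable_fst.aemeasurable hm3
    have e4 : (∫ y, |y| ^ (4 * q - 6) ∂ν) = ∫ p : ℝ × ℝ, |p.2| ^ (4 * q - 6) ∂π := by
      rw [← hsnd]; exact integral_map measurable_snd.aemeasurable hm4
    have hμ' : Integrable (fun p : ℝ × ℝ => |p.1| ^ (4 * q - 6)) π := by
      rw [← hfst] at hμ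
      exact (integrable_map_measure hm3 measurable_fst.aemeasurable).1 hμ
    have hν' : Integrable (fun p : ℝ × ℝ => |p.2| ^ (4 * q - 6)) π := by
      rw [← hsnd] at hν
      exact (integrable_map_measure hm4 measurable_snd.aemeasurable).1 hν
    have := aux_coupling_bound q hq π hμ' hν'
    rw [hΔ, hc, hS, e1, e2, e3, e4]
    exact this
  -- nonemptiness of T
  have hne : T.Nonempty := by
    refine ⟨Real.sqrt (∫ p : ℝ × ℝ, (p.1 - p.2) ^ 2 ∂(μ.prod ν)), μ.prod ν, inferInstance,
      ?_, ?_, rfl⟩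
    · rw [Measure.map_fst_prod]; simp
    · rw [Measure.map_snd_prod]; simp
  rw [hW2]
  rcases hc0.eq_or_lt with hceq | hcpos
  · obtain ⟨r₀, hr₀⟩ := hne
    have h1 := key r₀ hr₀
    rw [← hceq] at h1 ⊢
    simpa using h1
  · have hlb : ∀ r ∈ T, |Δ| / c ≤ r := by
      intro r hr
      rw [div_le_iff₀ hcpos]
      calc |Δ| ≤ c * r := key r hr
        _ = r * c := mul_comm _ _
    have h2 : |Δ| / c ≤ sInf T := le_csInf hne hlb
    calc |Δ| = c * (|Δ| / c) := by field_simp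
      _ ≤ c * sInf T := mul_le_mul_of_nonneg_left h2 hc0

theorem stmt9 (k q : ℕ) (hk : 1 ≤ k) (hq : 2 ≤ q) :
    ∃ C > 0, ∀ (u v : ℝ) (μ ν : Measure ℝ),
      IsProbabilityMeasure μ → IsProbabilityMeasure ν →
      Integrable (fun y => |y| ^ (4 * q - 6)) μ →
      Integrable (fun y => |y| ^ (4 * q - 6)) ν →
      ((-(u ^ (2 * k - 1)) * ∫ y, y ^ (2 * q - 2) ∂μ) -
          (-(v ^ (2 * k - 1)) * ∫ y, y ^ (2 * q - 2) ∂ν)) * (u - v) ≤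
        C * ((∫ y, |y| ^ (4 * q - 6) ∂μ) + ∫ y, |y| ^ (4 * q - 6) ∂ν) * |u - v| ^ 2 +
          C * |v| ^ (4 * k - 2) * W2 μ ν ^ 2 := by
  refine ⟨(2 * q : ℝ) * Real.sqrt 2 + 1, by positivity, ?_⟩
  intro u v μ ν hμp hνp hμi hνi
  haveI := hμp; haveI := hνp
  set K : ℝ := (2 * q : ℝ) * Real.sqrt 2 with hK
  have hK0 : 0 ≤ K := by positivity
  set a := 2 * k - 1 with ha
  set Iμ := ∫ y, y ^ (2 * q - 2) ∂μ with hIμ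
  set Iν := ∫ y, y ^ (2 * q - 2) ∂ν with hIν
  set S := (∫ y, |y| ^ (4 * q - 6) ∂μ) + ∫ y, |y| ^ (4 * q - 6) ∂ν with hSdef
  set W := W2 μ ν with hW
  have hS0 : 0 ≤ S := by
    rw [hSdef]
    exact add_nonneg (integral_nonneg fun y => by positivity)
      (integral_nonneg fun y => by positivity)
  have hIμ0 : 0 ≤ Iμ := by
    rw [hIμ]
    refine integral_nonneg fun y => ?_
    have : y ^ (2 * q - 2) = (y ^ (q - 1)) ^ 2 := by
      rw [← pow_mul]; congr 1; omega
    rw [this]; positivity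
  have hodd : Odd a := ⟨k - 1, by omega⟩
  have h1 : 0 ≤ (u ^ a - v ^ a) * (u - v) := by
    rcases le_total u v with h | h
    · have h' : u ^ a ≤ v ^ a := (hodd.strictMono_pow (R := ℝ)).monotone h
      nlinarith [h']
    · have h' : v ^ a ≤ u ^ a := (hodd.strictMono_pow (R := ℝ)).monotone h
      exact mul_nonneg (by linarith) (by linarith)
  have hΔ := aux_moment_W2 q hq μ ν hμi hνi
  rw [← hIμ, ← hIν, ← hSdef, ← hW, ← hK] at hΔ
  have h2 : v ^ a * (Iν - Iμ) * (u - v) ≤ |v| ^ a * (K * Real.sqrt S * W) * |u - v| := by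
    calc v ^ a * (Iν - Iμ) * (u - v) ≤ |v ^ a * (Iν - Iμ) * (u - v)| := le_abs_self _
      _ = |v| ^ a * |Iν - Iμ| * |u - v| := by rw [abs_mul, abs_mul, abs_pow]
      _ ≤ |v| ^ a * (K * Real.sqrt S * W) * |u - v| := by
          refine mul_le_mul_of_nonneg_right ?_ (abs_nonneg _)
          exact mul_le_mul_of_nonneg_left hΔ (pow_nonneg (abs_nonneg v) a)
  have hX0 : 0 ≤ S * |u - v| ^ 2 := by positivity
  have hY0 : 0 ≤ |v| ^ (4 * k - 2) * W ^ 2 := by positivity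
  have hsq1 : (Real.sqrt S * |u - v|) ^ 2 = S * |u - v| ^ 2 := by
    rw [mul_pow, Real.sq_sqrt hS0]
  have hsq2 : (|v| ^ a * W) ^ 2 = |v| ^ (4 * k - 2) * W ^ 2 := by
    rw [mul_pow, ← pow_mul]; congr 2; omega
  have hyoung : (Real.sqrt S * |u - v|) * (|v| ^ a * W) ≤
      (S * |u - v| ^ 2 + |v| ^ (4 * k - 2) * W ^ 2) / 2 := by
    rw [← hsq1, ← hsq2]
    nlinarith [sq_nonneg (Real.sqrt S * |u - v| - |v| ^ a * W)]
  have hterm2 : v ^ a * (Iν - Iμ) * (u - v) ≤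
      K * ((S * |u - v| ^ 2 + |v| ^ (4 * k - 2) * W ^ 2) / 2) := by
    refine h2.trans ?_
    have : |v| ^ a * (K * Real.sqrt S * W) * |u - v|
        = K * ((Real.sqrt S * |u - v|) * (|v| ^ a * W)) := by ring
    rw [this]
    exact mul_le_mul_of_nonneg_left hyoung hK0
  have hterm1 : -((u ^ a - v ^ a) * (u - v)) * Iμ ≤ 0 :=
    mul_nonpos_of_nonpos_of_nonneg (neg_nonpos.2 h1) hIμ0
  have hLHS : ((-(u ^ a)) * Iμ - (-(v ^ a)) * Iν) * (u - v)
      = -((u ^ a - v ^ a) * (u - v)) * Iμ + v ^ a * (Iν - Iμ) * (u - v) := by ring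
  rw [hLHS]
  have hC : K / 2 ≤ K + 1 := by linarith
  clear_value K a Iμ Iν S W
  nlinarith [mul_nonneg (by linarith : (0:ℝ) ≤ K / 2 + 1) hX0,
    mul_nonneg (by linarith : (0:ℝ) ≤ K / 2 + 1) hY0]
end
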